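/- Let k ⊆ K ⊆ L be fields with [L:K] < ∞. Then lev_k(L/K) = 0 if and only if L embeds over K into the compositum k̄K (the subfield of an algebraic closure of K generated by K and the algebraic closure of k). In particular, if k is algebraically closed, then lev_k(L/K) = 0 if and only if L = K. -/

import Mathlib

set_option synthInstance.maxHeartbeats 1000000
set_option maxHeartbeats 2000000

open scoped TensorProduct

universe u

/-- The transcendence degree of `E` over `k`, as a cardinal: the supremum of the cardinalities
of algebraically independent subsets of `E`. -/
noncomputable def trdeg (k E : Type u) [CommRing k] [CommRing E] [Algebra k E] : Cardinal :=
  ⨆ s : {s : Set E // AlgebraicIndependent k ((↑) : s → E)}, Cardinal.mk s.1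

/-- The `K`-algebra `A` descends to the intermediate field `K₀` of `K/k`: there is a
`K₀`-algebra `A₀` with `A ≅ A₀ ⊗_{K₀} K` as `K`-algebras. -/
def Descends (k : Type u) {K : Type u} (A : Type u) [Field k] [Field K] [Algebra k K]
    [Ring A] [Algebra K A] (K₀ : IntermediateField k K) : Prop :=
  ∃ (A₀ : Type u) (_ : Ring A₀) (_ : Algebra K₀ A₀),
    Nonempty ((K ⊗[K₀] A₀) ≃ₐ[K] A)

/-- The essential dimension `ed k K A` of a `K`-algebra `A` over the base field `k ⊆ K`:
the minimum of `trdeg k K₀` over all intermediate fields `k ⊆ K₀ ⊆ K` to which `A`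
descends. -/
noncomputable def ed (k K A : Type u) [Field k] [Field K] [Algebra k K]
    [Ring A] [Algebra K A] : Cardinal :=
  ⨅ K₀ : {K₀ : IntermediateField k K // Descends k A K₀}, trdeg k K₀.1

/-- `HasLevelLE k K L d`: there is a tower of finite field extensions
`K = K₀ ⊆ K₁ ⊆ ... ⊆ K_m` (realized as a chain of intermediate fields of an extension
`M/K` starting with the image of `K`) such that `L` embeds into `K_m` over `K` and each step
`Kᵢ/Kᵢ₋₁` satisfies `ed k Kᵢ₋₁ Kᵢ ≤ d`. -/
def HasLevelLE (k K L : Type u) [Field k] [Field K] [Field L]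
    [Algebra k K] [Algebra K L] (d : Cardinal) : Prop :=
  ∃ (M : Type u) (_ : Field M) (_ : Algebra k M) (_ : Algebra K M) (_ : IsScalarTower k K M)
    (f : L →ₐ[K] M) (m : ℕ) (c : Fin (m + 1) → IntermediateField k M) (hc : Monotone c),
    c 0 = (IsScalarTower.toAlgHom k K M).fieldRange ∧
    (∀ x : L, f x ∈ c (Fin.last m)) ∧
    ∀ i : Fin m,
      (letI : Algebra (c i.castSucc) (c i.succ) :=
        (IntermediateField.inclusion (hc (Fin.castSucc_lt_succ : i.castSucc < i.succ).le)).toAlgebra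
       letI : Module (c i.castSucc) (c i.succ) := Algebra.toModule
       FiniteDimensional (c i.castSucc) (c i.succ)) ∧
      @ed k (c i.castSucc) (c i.succ) _ _ _ _
        (IntermediateField.inclusion (hc (Fin.castSucc_lt_succ : i.castSucc < i.succ).le)).toAlgebra ≤ d

/-- The level `lev k K L` of the finite field extension `L/K` relative to the base field `k`:
the smallest `d` admitting a tower as in `HasLevelLE`. -/
noncomputable def lev (k K L : Type u) [Field k] [Field K] [Field L]
    [Algebra k K] [Algebra K L] : Cardinal :=
  sInf {d : Cardinal | HasLevelLE k K L d}

section TrdegAux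

variable {k E : Type u} [Field k] [Field E] [Algebra k E]

lemma trdeg_eq_zero_of_isAlgebraic (h : Algebra.IsAlgebraic k E) : trdeg k E = 0 := by
  have hne : Nonempty {s : Set E // AlgebraicIndependent k ((↑) : s → E)} :=
    ⟨⟨∅, algebraicIndependent_empty⟩⟩
  refine le_antisymm (ciSup_le' ?_) zero_le
  rintro ⟨s, hs⟩
  have : IsEmpty s := ⟨fun x => (hs.transcendental x) (h.isAlgebraic x.1)⟩
  exact le_of_eq (Cardinal.mk_eq_zero _)

lemma isAlgebraic_of_trdeg_eq_zero (h : trdeg k E = 0) : Algebra.IsAlgebraic k E := by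
  refine ⟨fun x => ?_⟩
  by_contra hx
  have hs : AlgebraicIndependent k ((↑) : ({x} : Set E) → E) := by
    rw [algebraicIndependent_unique_type_iff]
    exact hx
  have h1 : (1 : Cardinal) ≤ trdeg k E := by
    refine le_trans ?_ (le_ciSup (Cardinal.bddAbove_range _)
      (⟨{x}, hs⟩ : {s : Set E // AlgebraicIndependent k ((↑) : s → E)}))
    simp
  rw [h] at h1
  exact (not_le.mpr zero_lt_one) h1

end TrdegAux

section EdAux

variable {k K A : Type u} [Field k] [Field K] [Algebra k K] [Ring A] [Algebra K A]

set_option maxHeartbeats 1000000 in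
set_option synthInstance.maxHeartbeats 400000 in
lemma descends_top : Descends k A (⊤ : IntermediateField k K) := by
  refine ⟨A, inferInstance, inferInstance, ⟨?_⟩⟩
  have hcomm : ∀ (x : K) (y : A), Commute ((Algebra.ofId K A) x) ((AlgHom.id (⊤ : IntermediateField k K) A) y) :=
    fun x y => (Algebra.commutes x y)
  let φ : (K ⊗[(⊤ : IntermediateField k K)] A) →ₐ[K] A :=
    Algebra.TensorProduct.lift (Algebra.ofId K A) (AlgHom.id _ A) hcomm
  have key : ∀ t : K ⊗[(⊤ : IntermediateField k K)] A, t = 1 ⊗ₜ[(⊤ : IntermediateField k K)] φ t := by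
    intro t
    induction t with
    | zero => rw [map_zero, TensorProduct.tmul_zero]
    | tmul x a =>
      rw [Algebra.TensorProduct.lift_tmul]
      have hx : ((⟨x, trivial⟩ : (⊤ : IntermediateField k K))) • (1 : K) = x := by
        rw [Algebra.smul_def, mul_one]; rfl
      have h2 : (Algebra.ofId K A) x * (AlgHom.id (⊤ : IntermediateField k K) A) a
          = (⟨x, trivial⟩ : (⊤ : IntermediateField k K)) • a := by
        rw [Algebra.smul_def, IsScalarTower.algebraMap_apply (⊤ : IntermediateField k K) K A]
        rfl
      rw [h2, ← TensorProduct.smul_tmul, hx]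
    | add t s ht hs =>
      rw [map_add, TensorProduct.tmul_add]
      nth_rewrite 1 [ht, hs]
      rfl
  have hbij : Function.Bijective φ := by
    constructor
    · intro t s hts
      rw [key t, key s, hts]
    · intro a
      exact ⟨1 ⊗ₜ a, by rw [Algebra.TensorProduct.lift_tmul]; simp⟩
  exact AlgEquiv.ofBijective φ hbij

lemma ed_le_of_descends (K₀ : IntermediateField k K) (h : Descends k A K₀) :
    ed k K A ≤ trdeg k K₀ :=
  ciInf_le (OrderBot.bddBelow _) (⟨K₀, h⟩ : {K₀ : IntermediateField k K // Descends k A K₀})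

lemma ed_le_mk : ed k K A ≤ Cardinal.mk K := by
  refine le_trans (ed_le_of_descends _ descends_top) ?_
  refine ciSup_le' ?_
  rintro ⟨s, -⟩
  calc Cardinal.mk s ≤ Cardinal.mk (⊤ : IntermediateField k K) :=
        Cardinal.mk_le_of_injective (Subtype.val_injective)
    _ = Cardinal.mk K := Cardinal.mk_congr (IntermediateField.topEquiv (F := k) (E := K)).toEquiv

lemma exists_of_ed_eq_zero (h : ed k K A = 0) :
    ∃ K₀ : IntermediateField k K, Descends k A K₀ ∧ Algebra.IsAlgebraic k K₀ := by
  haveI : Nonempty {K₀ : IntermediateField k K // Descends k A K₀} := ⟨⟨⊤, descends_top⟩⟩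
  have hmem := csInf_mem (Set.range_nonempty
    (fun K₀ : {K₀ : IntermediateField k K // Descends k A K₀} => trdeg k K₀.1))
  obtain ⟨⟨K₀, hd⟩, hK₀⟩ := hmem
  exact ⟨K₀, hd, isAlgebraic_of_trdeg_eq_zero (hK₀.trans h)⟩
end EdAux
section Coeff

variable {k F M : Type u} [Field k] [Field F] [Field M]
    [Algebra k F] [Algebra F M] [Algebra k M] [IsScalarTower k F M]

lemma coeff_minpoly_isIntegral {x : M} (hk : IsIntegral k x) (n : ℕ) :
    IsIntegral k ((minpoly F x).coeff n) := by
  classical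
  let C := AlgebraicClosure M
  have hxF : IsIntegral F x := hk.tower_top
  set g : Polynomial F := minpoly F x with hg
  have hgmonic : g.Monic := minpoly.monic hxF
  set gm : Polynomial C := g.map (algebraMap F C) with hgm
  have hmm : gm.Monic := hgmonic.map _
  have hsplits : gm.Splits := IsAlgClosed.splits gm
  have hroots : ∀ r ∈ gm.roots, IsIntegral k r := by
    intro r hr
    have hdvd : g ∣ (minpoly k x).map (algebraMap k F) := minpoly.dvd_map_of_isScalarTower k F x
    have hdvd2 : gm ∣ (minpoly k x).map (algebraMap k C) := by
      have h2 := Polynomial.map_dvd (algebraMap F C) hdvd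
      rwa [Polynomial.map_map, ← IsScalarTower.algebraMap_eq] at h2
    have hrroot : Polynomial.eval r gm = 0 := Polynomial.isRoot_of_mem_roots hr
    have halg : IsAlgebraic k r := by
      refine ⟨minpoly k x, minpoly.ne_zero hk, ?_⟩
      obtain ⟨h, hh⟩ := hdvd2
      rw [Polynomial.aeval_def, ← Polynomial.eval_map, hh, Polynomial.eval_mul, hrroot, zero_mul]
    exact halg.isIntegral
  by_cases hn : g.natDegree < n
  · rw [Polynomial.coeff_eq_zero_of_natDegree_lt hn]; exact isIntegral_zero
  push_neg at hn
  have hmem : gm.coeff n ∈ integralClosure k C := by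
    have hcard : gm.roots.card = gm.natDegree := (Polynomial.splits_iff_card_roots).mp hsplits
    have hnd : gm.natDegree = g.natDegree := hgmonic.natDegree_map _
    have hn' : n ≤ gm.roots.card := by rw [hcard, hnd]; exact hn
    have hexp := hsplits.eq_prod_roots_of_monic hmm
    rw [show gm.coeff n = (Multiset.map (fun a => Polynomial.X - Polynomial.C a) gm.roots).prod.coeff n
      from by rw [← hexp], Multiset.prod_X_sub_C_coeff gm.roots hn']
    refine mul_mem (pow_mem (neg_mem (one_mem _)) _) ?_
    rw [Multiset.esymm]
    refine multiset_sum_mem _ ?_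
    intro t ht
    obtain ⟨u, hu, rfl⟩ := Multiset.mem_map.mp ht
    refine multiset_prod_mem _ ?_
    intro y hy
    exact hroots y (Multiset.mem_of_le (Multiset.mem_powersetCard.mp hu).1 hy)
  have h3 : IsIntegral k (algebraMap F C (g.coeff n)) := by
    rw [← Polynomial.coeff_map]
    exact hmem
  exact IsIntegral.tower_bot (algebraMap F C).injective h3

end Coeff
section Core

variable {k M : Type u} [Field k] [Field M] [Algebra k M]

lemma equiv_adjoinRoot {F E : IntermediateField k M} (hFE : F ≤ E) {β : M}
    (hβ : IsIntegral F β) (hE : E = F ⊔ IntermediateField.adjoin k {β}) :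
    letI : Algebra F E := (IntermediateField.inclusion hFE).toAlgebra
    Nonempty (AdjoinRoot (minpoly F β) ≃ₐ[F] E) := by
  letI : Algebra F E := (IntermediateField.inclusion hFE).toAlgebra
  haveI : IsScalarTower F E M := IsScalarTower.of_algebraMap_eq (fun f => rfl)
  have hβE : β ∈ E := by
    rw [hE]
    exact le_sup_right (α := IntermediateField k M)
      (IntermediateField.mem_adjoin_simple_self k β)
  set b : ↥E := ⟨β, hβE⟩ with hb
  have hbβ : algebraMap E M b = β := rfl
  have hbint : IsIntegral F b := by
    rw [show β = algebraMap E M b from rfl] at hβ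
    exact (isIntegral_algebraMap_iff (algebraMap ↥E M).injective).mp hβ
  have hmineq : minpoly F β = minpoly F b := by
    rw [← hbβ]
    exact minpoly.algebraMap_eq (algebraMap ↥E M).injective b
  have hsub : ∀ y : ↥E, (y : M) ∈ Algebra.adjoin F ({β} : Set M) := by
    intro y
    have hy : (y : M) ∈ IntermediateField.restrictScalars k
        (IntermediateField.adjoin F ({β} : Set M)) := by
      rw [IntermediateField.restrictScalars_adjoin_eq_sup, ← hE]
      exact y.2
    have h5 : (y : M) ∈ (IntermediateField.adjoin F ({β} : Set M)).toSubalgebra := hy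
    rwa [IntermediateField.adjoin_simple_toSubalgebra_of_isAlgebraic hβ.isAlgebraic] at h5
  have h4 : Algebra.adjoin F ({β} : Set M)
      = (Algebra.adjoin F ({b} : Set ↥E)).map (IsScalarTower.toAlgHom F ↥E M) := by
    rw [AlgHom.map_adjoin, Set.image_singleton]
    rfl
  have hgen : Algebra.adjoin F ({b} : Set ↥E) = ⊤ := by
    rw [eq_top_iff]
    intro y _
    have h6 : (y : M) ∈ (Algebra.adjoin F ({b} : Set ↥E)).map (IsScalarTower.toAlgHom F ↥E M) := by
      rw [← h4]; exact hsub y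
    obtain ⟨z, hz, hzy⟩ := Subalgebra.mem_map.mp h6
    have : z = y := Subtype.val_injective hzy
    rwa [← this]
  rw [hmineq]
  exact ⟨(minpoly.equivAdjoin hbint).trans
    ((Subalgebra.equivOfEq _ _ hgen).trans Subalgebra.topEquiv)⟩

lemma finiteDimensional_step {F E : IntermediateField k M} (hFE : F ≤ E) {β : M}
    (hβ : IsIntegral F β) (hE : E = F ⊔ IntermediateField.adjoin k {β}) :
    letI : Algebra F E := (IntermediateField.inclusion hFE).toAlgebra
    letI : Module F E := Algebra.toModule
    FiniteDimensional F E := by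
  letI : Algebra F E := (IntermediateField.inclusion hFE).toAlgebra
  obtain ⟨e⟩ := equiv_adjoinRoot hFE hβ hE
  haveI : Module.Finite F (AdjoinRoot (minpoly F β)) :=
    Module.Finite.of_basis (AdjoinRoot.powerBasis (minpoly.ne_zero hβ)).basis
  exact Module.Finite.equiv e.toLinearEquiv

end Core
section Ed0

variable {k M : Type u} [Field k] [Field M] [Algebra k M]

lemma ed_le_zero_step {F E : IntermediateField k M} (hFE : F ≤ E) {β : M}
    (hβk : IsAlgebraic k β) (hE : E = F ⊔ IntermediateField.adjoin k {β}) :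
    @ed k F E _ _ _ _ (IntermediateField.inclusion hFE).toAlgebra ≤ 0 := by
  letI : Algebra F E := (IntermediateField.inclusion hFE).toAlgebra
  have hβint : IsIntegral F β := hβk.isIntegral.tower_top
  obtain ⟨e⟩ := equiv_adjoinRoot hFE hβint hE
  set g := minpoly (↥F) β with hgdef
  have hcoeff : ∀ n, IsIntegral k (g.coeff n) := fun n =>
    coeff_minpoly_isIntegral (hβk.isIntegral) n
  set K₀ : IntermediateField k ↥F := IntermediateField.adjoin k (Set.range g.coeff) with hK₀
  have hcoeffmem : ∀ n, g.coeff n ∈ K₀ := fun n =>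
    IntermediateField.subset_adjoin _ _ ⟨n, rfl⟩
  set q : Polynomial ↥K₀ := ∑ i ∈ Finset.range (g.natDegree + 1),
      Polynomial.C (⟨g.coeff i, hcoeffmem i⟩ : ↥K₀) * Polynomial.X ^ i with hq
  have hqmap : q.map (algebraMap ↥K₀ ↥F) = g := by
    rw [hq, Polynomial.map_sum]
    conv_rhs => rw [Polynomial.as_sum_range' g (g.natDegree + 1) (Nat.lt_succ_self _)]
    refine Finset.sum_congr rfl fun i _ => ?_
    rw [Polynomial.map_mul, Polynomial.map_C, Polynomial.map_pow, Polynomial.map_X,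
      Polynomial.C_mul_X_pow_eq_monomial]
    rfl
  have hroot : Polynomial.aeval (AdjoinRoot.root g) q = 0 := by
    rw [← Polynomial.aeval_map_algebraMap ↥F, hqmap, Polynomial.aeval_def,
      AdjoinRoot.algebraMap_eq]
    exact AdjoinRoot.eval₂_root g
  set φ : (↥F ⊗[↥K₀] AdjoinRoot q) →ₐ[↥F] AdjoinRoot g :=
    Algebra.TensorProduct.lift (Algebra.ofId ↥F (AdjoinRoot g))
      (AdjoinRoot.liftAlgHom q (Algebra.ofId ↥K₀ (AdjoinRoot g)) (AdjoinRoot.root g) (by rw [Algebra.toRingHom_ofId, ← Polynomial.aeval_def]; exact hroot)) (fun x y => Commute.all _ _) with hφ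
  have hroot2 : Polynomial.aeval
      ((1 : ↥F) ⊗ₜ[↥K₀] (AdjoinRoot.root q) : ↥F ⊗[↥K₀] AdjoinRoot q) g = 0 := by
    rw [← hqmap, Polynomial.aeval_map_algebraMap]
    rw [show ((1 : ↥F) ⊗ₜ[↥K₀] (AdjoinRoot.root q) : ↥F ⊗[↥K₀] AdjoinRoot q)
      = Algebra.TensorProduct.includeRight (AdjoinRoot.root q) from rfl]
    rw [Polynomial.aeval_algHom_apply]
    rw [show Polynomial.aeval (AdjoinRoot.root q) q = 0 from by
      rw [Polynomial.aeval_def, AdjoinRoot.algebraMap_eq]; exact AdjoinRoot.eval₂_root q]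
    rw [map_zero]
  set ψ : AdjoinRoot g →ₐ[↥F] (↥F ⊗[↥K₀] AdjoinRoot q) :=
    AdjoinRoot.liftAlgHom g (Algebra.ofId ↥F (↥F ⊗[↥K₀] AdjoinRoot q)) ((1 : ↥F) ⊗ₜ[↥K₀] (AdjoinRoot.root q)) (by rw [Algebra.toRingHom_ofId, ← Polynomial.aeval_def]; exact hroot2) with hψ
  have hφψ : φ.comp ψ = AlgHom.id ↥F (AdjoinRoot g) := by
    refine AdjoinRoot.algHom_ext ?_
    rw [AlgHom.comp_apply, AlgHom.id_apply, hψ, AdjoinRoot.liftAlgHom_root, hφ,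
      Algebra.TensorProduct.lift_tmul, map_one, one_mul, AdjoinRoot.liftAlgHom_root]
  have hψφ : ∀ t, ψ (φ t) = t := by
    intro t
    induction t with
    | zero => rw [map_zero, map_zero]
    | tmul x a =>
      rw [hφ, Algebra.TensorProduct.lift_tmul, map_mul]
      have h1 : ψ ((Algebra.ofId ↥F (AdjoinRoot g)) x) = x ⊗ₜ[↥K₀] 1 := by
        rw [show (Algebra.ofId ↥F (AdjoinRoot g)) x = algebraMap ↥F (AdjoinRoot g) x from rfl,
          AlgHom.commutes, Algebra.TensorProduct.algebraMap_apply, Algebra.algebraMap_self,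
          RingHom.id_apply]
      have h2 : ψ ((AdjoinRoot.liftAlgHom q (Algebra.ofId ↥K₀ (AdjoinRoot g)) (AdjoinRoot.root g) (by rw [Algebra.toRingHom_ofId, ← Polynomial.aeval_def]; exact hroot)) a) = 1 ⊗ₜ[↥K₀] a := by
        have hext := AdjoinRoot.algHom_ext (R := ↥K₀) (f := q)
          (g₁ := (ψ.restrictScalars ↥K₀).comp (AdjoinRoot.liftAlgHom q (Algebra.ofId ↥K₀ (AdjoinRoot g)) (AdjoinRoot.root g) (by rw [Algebra.toRingHom_ofId, ← Polynomial.aeval_def]; exact hroot)))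
          (g₂ := Algebra.TensorProduct.includeRight)
          (by rw [AlgHom.comp_apply, AdjoinRoot.liftAlgHom_root, AlgHom.restrictScalars_apply, hψ,
            AdjoinRoot.liftAlgHom_root]; rfl)
        have := DFunLike.congr_fun hext a
        rwa [AlgHom.comp_apply, AlgHom.restrictScalars_apply] at this
      rw [h1, h2, Algebra.TensorProduct.tmul_mul_tmul, mul_one, one_mul]
    | add t s ht hs => rw [map_add, map_add, ht, hs]
  have hdesc : @Descends k ↥F ↥E _ _ _ _ (IntermediateField.inclusion hFE).toAlgebra K₀ := by
    refine ⟨AdjoinRoot q, inferInstance, inferInstance, ⟨?_⟩⟩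
    exact (AlgEquiv.ofAlgHom φ ψ hφψ (AlgHom.ext hψφ)).trans e
  have htr : trdeg k ↥K₀ = 0 :=
    trdeg_eq_zero_of_isAlgebraic (IntermediateField.isAlgebraic_adjoin (fun x hx => by
      obtain ⟨n, rfl⟩ := hx; exact hcoeff n))
  exact le_trans (ed_le_of_descends K₀ hdesc) (le_of_eq htr)

end Ed0
section Fwd

variable {k M : Type u} [Field k] [Field M] [Algebra k M]

lemma fwd_step {F E : IntermediateField k M} (hFE : F ≤ E)
    (hfin : letI : Algebra F E := (IntermediateField.inclusion hFE).toAlgebra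
            letI : Module F E := Algebra.toModule
            FiniteDimensional F E)
    (hed : @ed k F E _ _ _ _ (IntermediateField.inclusion hFE).toAlgebra ≤ 0) :
    E ≤ F ⊔ IntermediateField.adjoin k {y : M | IsAlgebraic k y} := by
  letI : Algebra F E := (IntermediateField.inclusion hFE).toAlgebra
  haveI : FiniteDimensional F E := hfin
  haveI : IsScalarTower F E M := IsScalarTower.of_algebraMap_eq (fun f => rfl)
  have h0 : @ed k F E _ _ _ _ (IntermediateField.inclusion hFE).toAlgebra = 0 :=
    le_antisymm hed zero_le
  obtain ⟨K₀, hdesc, halg⟩ := exists_of_ed_eq_zero h0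
  obtain ⟨A₀, hring, halgK₀, ⟨ψ⟩⟩ := hdesc
  haveI : IsScalarTower k ↥K₀ ↥E := by
    apply IsScalarTower.of_algebraMap_eq
    intro c
    apply Subtype.ext
    rfl
  letI b0 := Module.Basis.ofVectorSpace ↥K₀ A₀
  haveI : FiniteDimensional ↥F (↥F ⊗[↥K₀] A₀) := Module.Finite.equiv ψ.symm.toLinearEquiv
  haveI : Fintype (Module.Basis.ofVectorSpaceIndex ↥K₀ A₀) :=
    FiniteDimensional.fintypeBasisIndex (b0.baseChange ↥F)
  haveI : Module.Finite ↥K₀ A₀ := Module.Finite.of_basis b0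
  haveI : Algebra.IsIntegral k ↥K₀ := halg.isIntegral
  set T := F ⊔ IntermediateField.adjoin k {y : M | IsAlgebraic k y} with hT
  have key : ∀ t : ↥F ⊗[↥K₀] A₀, ((ψ t : ↥E) : M) ∈ T := by
    intro t
    induction t with
    | zero =>
      rw [map_zero, ZeroMemClass.coe_zero]
      exact zero_mem T
    | tmul f a =>
      have h1 : (f ⊗ₜ[↥K₀] a : ↥F ⊗[↥K₀] A₀) = (algebraMap ↥F _ f) * (1 ⊗ₜ[↥K₀] a) := by
        rw [Algebra.TensorProduct.algebraMap_apply, Algebra.TensorProduct.tmul_mul_tmul,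
          mul_one, one_mul, Algebra.algebraMap_self, RingHom.id_apply]
      rw [h1, map_mul, AlgEquiv.commutes]
      rw [show (((algebraMap ↥F ↥E f) * ψ ((1 : ↥F) ⊗ₜ[↥K₀] a) : ↥E) : M)
        = ((algebraMap ↥F ↥E f : ↥E) : M) * ((ψ ((1 : ↥F) ⊗ₜ[↥K₀] a) : ↥E) : M) from rfl]
      refine mul_mem ?_ ?_
      · rw [show ((algebraMap ↥F ↥E f : ↥E) : M) = (f : M) from rfl]
        exact (le_sup_left : F ≤ T) f.2
      · have hIa : IsIntegral ↥K₀ a := IsIntegral.of_finite ↥K₀ a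
        have hIψ : IsIntegral ↥K₀ (ψ ((1 : ↥F) ⊗ₜ[↥K₀] a)) := by
          rw [show ψ ((1 : ↥F) ⊗ₜ[↥K₀] a) = ((ψ.toAlgHom.restrictScalars ↥K₀).comp
            (Algebra.TensorProduct.includeRight)) a from rfl]
          exact hIa.map _
        have hIk : IsIntegral k (ψ ((1 : ↥F) ⊗ₜ[↥K₀] a)) := isIntegral_trans _ hIψ
        have halg2 : IsAlgebraic k ((ψ ((1 : ↥F) ⊗ₜ[↥K₀] a) : ↥E) : M) :=
          IntermediateField.isAlgebraic_iff.mp hIk.isAlgebraic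
        exact (le_sup_right : IntermediateField.adjoin k {y : M | IsAlgebraic k y} ≤ T)
          (IntermediateField.subset_adjoin _ _ halg2)
    | add t s ht hs =>
      rw [map_add]
      rw [show ((ψ t + ψ s : ↥E) : M) = ((ψ t : ↥E) : M) + ((ψ s : ↥E) : M) from rfl]
      exact add_mem ht hs
  intro x hx
  have h2 := key (ψ.symm ⟨x, hx⟩)
  rwa [AlgEquiv.apply_symm_apply] at h2

end Fwd

section Span

variable {K L Ω : Type u} [Field K] [Field L] [Field Ω] [Algebra K L] [Algebra K Ω]
  [FiniteDimensional K L]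

lemma forall_mem_of_basis (f : L →ₐ[K] Ω) (N : IntermediateField K Ω)
    (h : ∀ j, f (Module.finBasis K L j) ∈ N) : ∀ x, f x ∈ N := by
  intro x
  have hx : x ∈ Submodule.span K (Set.range (Module.finBasis K L)) := by
    rw [Module.Basis.span_eq]; trivial
  refine Submodule.span_induction ?_ ?_ ?_ ?_ hx
  · rintro y ⟨j, rfl⟩; exact h j
  · rw [map_zero]; exact zero_mem N
  · intro y z _ _ hy hz; rw [map_add]; exact add_mem hy hz
  · intro c y _ hy
    rw [map_smul, Algebra.smul_def]
    exact mul_mem (IntermediateField.algebraMap_mem N c) hy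

end Span

section Tower

variable (k K L : Type u) [Field k] [Field K] [Field L] [Algebra k K] [Algebra K L]

lemma hasLevelLE_of_gens {Ω : Type u} [Field Ω] [Algebra k Ω] [Algebra K Ω]
    [IsScalarTower k K Ω] (f : L →ₐ[K] Ω) {r : ℕ} (β : Fin r → Ω)
    (hβint : ∀ j, ∃ p : Polynomial K, p.Monic ∧ Polynomial.eval₂ (algebraMap K Ω) (β j) p = 0)
    (hf : ∀ x : L, f x ∈ IntermediateField.adjoin K (Set.range β))
    (d : Cardinal)
    (hd : ∀ (F E : IntermediateField k Ω) (hFE : F ≤ E) (j : Fin r),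
        E = F ⊔ IntermediateField.adjoin k {β j} →
        @ed k F E _ _ _ _ (IntermediateField.inclusion hFE).toAlgebra ≤ d) :
    HasLevelLE k K L d := by
  classical
  set fr : IntermediateField k Ω := (IsScalarTower.toAlgHom k K Ω).fieldRange with hfr
  set c : Fin (r + 1) → IntermediateField k Ω := fun i =>
    fr ⊔ IntermediateField.adjoin k (β '' {j : Fin r | (j : ℕ) < (i : ℕ)}) with hcdef
  have hmono : Monotone c := by
    intro i j hij
    have hij' : (i : ℕ) ≤ (j : ℕ) := hij
    refine sup_le_sup le_rfl (IntermediateField.adjoin.mono _ _ _ (Set.image_mono ?_))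
    intro a ha
    simp only [Set.mem_setOf_eq] at ha ⊢
    omega
  have hc0 : c 0 = fr := by
    have h1 : {j : Fin r | (j : ℕ) < ((0 : Fin (r + 1)) : ℕ)} = ∅ := by
      ext j; simp
    rw [hcdef]
    simp only [h1, Set.image_empty, IntermediateField.adjoin_empty, sup_bot_eq]
  have hstepset : ∀ i : Fin r,
      c i.succ = c i.castSucc ⊔ IntermediateField.adjoin k {β i} := by
    intro i
    have h2 : {j : Fin r | (j : ℕ) < ((Fin.succ i) : ℕ)}
        = {j : Fin r | (j : ℕ) < ((Fin.castSucc i) : ℕ)} ∪ {i} := by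
      ext j
      simp only [Set.mem_setOf_eq, Set.mem_union, Set.mem_singleton_iff, Fin.val_succ,
        Fin.coe_castSucc, Fin.ext_iff]
      omega
    rw [hcdef]
    simp only [h2, Set.image_union, Set.image_singleton, IntermediateField.adjoin_union,
      sup_assoc]
  have hmemc : ∀ (i : Fin (r + 1)) (y : K), algebraMap K Ω y ∈ c i := by
    intro i y
    have : algebraMap K Ω y ∈ c 0 := by
      rw [hc0]
      exact ⟨y, rfl⟩
    exact hmono (Fin.zero_le i) this
  have hlast : ∀ x : L, f x ∈ c (Fin.last r) := by
    intro x
    have hsub : Set.range β ⊆ (c (Fin.last r) : Set Ω) := by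
      rintro y ⟨j, rfl⟩
      refine (le_sup_right :
        IntermediateField.adjoin k (β '' {j : Fin r | (j : ℕ) < ((Fin.last r) : ℕ)}) ≤ c (Fin.last r)) ?_
      exact IntermediateField.subset_adjoin _ _ ⟨j, j.isLt, rfl⟩
    set Y : IntermediateField K Ω := Subfield.toIntermediateField (c (Fin.last r)).toSubfield
      (fun y => hmemc (Fin.last r) y) with hY
    have h3 : IntermediateField.adjoin K (Set.range β) ≤ Y :=
      IntermediateField.adjoin_le_iff.mpr hsub
    exact h3 (hf x)
  refine ⟨Ω, inferInstance, inferInstance, inferInstance, inferInstance, f, r, c, hmono,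
    hc0, hlast, ?_⟩
  intro i
  have hFE := hmono (Fin.castSucc_lt_succ (i := i)).le
  obtain ⟨p, hpm, hproot⟩ := hβint i
  have hint : IsIntegral (c i.castSucc) (β i) := by
    set τ : K →+* ↥(c i.castSucc) :=
      (algebraMap K Ω).codRestrict (c i.castSucc).toSubfield (fun y => hmemc _ y) with hτ
    refine ⟨p.map τ, hpm.map τ, ?_⟩
    rw [Polynomial.eval₂_map]
    rw [show (algebraMap ↥(c i.castSucc) Ω).comp τ = algebraMap K Ω from rfl]
    exact hproot
  exact ⟨finiteDimensional_step hFE hint (hstepset i), hd _ _ hFE i (hstepset i)⟩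

end Tower
/-- For `k ⊆ K ⊆ L` with `[L:K] < ∞` and `Ω` an algebraic closure of `K`,
`lev_k(L/K) = 0` iff `L` embeds over `K` into the compositum `k̄K ⊆ Ω` (the subfield of `Ω`
generated by `K` and the elements algebraic over `k`). In particular, if `k` is algebraically
closed, then `lev_k(L/K) = 0` iff `L = K`. -/
theorem statement_10 (k K L Ω : Type u) [Field k] [Field K] [Field L] [Field Ω]
    [Algebra k K] [Algebra K L] [FiniteDimensional K L]
    [Algebra K Ω] [IsAlgClosure K Ω] [Algebra k Ω] [IsScalarTower k K Ω] :
    (lev k K L = 0 ↔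
      ∃ f : L →ₐ[K] Ω,
        ∀ x : L, f x ∈ IntermediateField.adjoin K {y : Ω | IsAlgebraic k y}) ∧
    (IsAlgClosed k → (lev k K L = 0 ↔ Function.Bijective (algebraMap K L))) := by
  haveI : IsAlgClosed Ω := IsAlgClosure.isAlgClosed K
  haveI : Algebra.IsAlgebraic K L := Algebra.IsAlgebraic.of_finite K L
  have main : lev k K L = 0 ↔ ∃ f : L →ₐ[K] Ω,
      ∀ x : L, f x ∈ IntermediateField.adjoin K {y : Ω | IsAlgebraic k y} := by
    constructor
    · intro hlev
      have hne : HasLevelLE k K L (Cardinal.mk Ω) := by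
        set f₀ : L →ₐ[K] Ω := IsAlgClosed.lift with hf₀
        exact hasLevelLE_of_gens k K L f₀ (fun j => f₀ (Module.finBasis K L j))
          (fun j => (IsIntegral.of_finite K (Module.finBasis K L j)).map f₀)
          (forall_mem_of_basis f₀ _
            (fun j => IntermediateField.subset_adjoin _ _ ⟨j, rfl⟩))
          (Cardinal.mk Ω)
          (fun F E hFE j hE => le_trans
            (@ed_le_mk k ↥F ↥E _ _ _ _ ((IntermediateField.inclusion hFE).toAlgebra))
            (Cardinal.mk_le_of_injective Subtype.val_injective))
      have h0 : HasLevelLE k K L 0 := by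
        have hmem := csInf_mem (⟨_, hne⟩ : {d : Cardinal | HasLevelLE k K L d}.Nonempty)
        rwa [show sInf {d : Cardinal | HasLevelLE k K L d} = lev k K L from rfl, hlev] at hmem
      obtain ⟨M, iM, ikM, iKM, itow, f, m, c, hc, hc0, hlastmem, hstep⟩ := h0
      have hchain : ∀ i : Fin (m + 1),
          c i ≤ c 0 ⊔ IntermediateField.adjoin k {y : M | IsAlgebraic k y} := by
        intro i
        induction i using Fin.induction with
        | zero => exact le_sup_left
        | succ i ih =>
          have hs := fwd_step (hc (Fin.castSucc_lt_succ (i := i)).le) (hstep i).1 (hstep i).2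
          exact hs.trans (sup_le ih le_sup_right)
      set SM := {y : M | IsAlgebraic k y} with hSM
      set SΩ := {y : Ω | IsAlgebraic k y} with hSΩ
      set F₂ : IntermediateField K M := IntermediateField.adjoin K (Set.range ⇑f ∪ SM) with hF₂
      haveI : Algebra.IsAlgebraic K F₂ := by
        refine IntermediateField.isAlgebraic_adjoin ?_
        rintro x (⟨y, rfl⟩ | hx)
        · exact (IsIntegral.of_finite K y).map f
        · exact (IsAlgebraic.tower_top K hx).isIntegral
      set φ : ↥F₂ →ₐ[K] Ω := IsAlgClosed.lift with hφ
      have hmem1 : ∀ x : L, f x ∈ F₂ := fun x =>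
        IntermediateField.subset_adjoin _ _ (Or.inl ⟨x, rfl⟩)
      set g' : L →ₐ[K] ↥F₂ :=
        { toFun := fun x => ⟨f x, hmem1 x⟩
          map_one' := Subtype.ext (map_one f)
          map_mul' := fun x y => Subtype.ext (map_mul f x y)
          map_zero' := Subtype.ext (map_zero f)
          map_add' := fun x y => Subtype.ext (map_add f x y)
          commutes' := fun y => Subtype.ext (f.commutes y) } with hg'
      haveI : IsScalarTower k ↥F₂ M := IsScalarTower.of_algebraMap_eq' rfl
      set Q : Subfield ↥F₂ :=
        (IntermediateField.adjoin K SΩ).toSubfield.comap (φ : ↥F₂ →+* Ω) with hQ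
      have hQK : ∀ y : K, algebraMap K ↥F₂ y ∈ Q := by
        intro y
        show φ (algebraMap K ↥F₂ y) ∈ (IntermediateField.adjoin K SΩ).toSubfield
        rw [φ.commutes y]
        exact IntermediateField.algebraMap_mem _ y
      have hQS : ∀ (y : M) (hy : y ∈ F₂), IsAlgebraic k y → (⟨y, hy⟩ : ↥F₂) ∈ Q := by
        intro y hy hyal
        have h1 : IsAlgebraic k (⟨y, hy⟩ : ↥F₂) :=
          (isAlgebraic_algebraMap_iff (algebraMap ↥F₂ M).injective).mp hyal
        obtain ⟨p, hp0, hpe⟩ := h1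
        have h2 : IsAlgebraic k (φ ⟨y, hy⟩) := by
          refine ⟨p, hp0, ?_⟩
          rw [show φ (⟨y, hy⟩ : ↥F₂) = (φ.restrictScalars k) ⟨y, hy⟩ from rfl,
            Polynomial.aeval_algHom_apply, hpe, map_zero]
        show φ (⟨y, hy⟩ : ↥F₂) ∈ (IntermediateField.adjoin K SΩ).toSubfield
        exact IntermediateField.subset_adjoin _ _ h2
      set Qm : Subfield M := Q.map (algebraMap ↥F₂ M) with hQm
      have hYk : ∀ x : k, algebraMap k M x ∈ Qm := by
        intro x
        refine Subfield.mem_map.mpr ⟨algebraMap k ↥F₂ x, ?_, rfl⟩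
        rw [IsScalarTower.algebraMap_apply k K ↥F₂ x]
        exact hQK _
      set Y : IntermediateField k M := Subfield.toIntermediateField Qm hYk with hY
      have hDY : c 0 ⊔ IntermediateField.adjoin k SM ≤ Y := by
        refine sup_le ?_ ?_
        · rw [hc0]
          intro x hx
          obtain ⟨y, rfl⟩ := hx
          exact Subfield.mem_map.mpr ⟨algebraMap K ↥F₂ y, hQK y, rfl⟩
        · refine IntermediateField.adjoin_le_iff.mpr ?_
          intro y hy
          have hyF₂ : y ∈ F₂ := IntermediateField.subset_adjoin _ _ (Or.inr hy)
          exact Subfield.mem_map.mpr ⟨⟨y, hyF₂⟩, hQS y hyF₂ hy, rfl⟩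
      refine ⟨φ.comp g', fun x => ?_⟩
      have h7 : f x ∈ Y := hDY ((hchain (Fin.last m)) (hlastmem x))
      obtain ⟨z, hzQ, hzval⟩ := Subfield.mem_map.mp h7
      have h9 : z = g' x := Subtype.ext hzval
      rw [h9] at hzQ
      exact hzQ
    · rintro ⟨f, hf⟩
      classical
      have hwit : ∀ j : Fin (Module.finrank K L), ∃ T : Finset Ω,
          ↑T ⊆ {y : Ω | IsAlgebraic k y} ∧
          f (Module.finBasis K L j) ∈ IntermediateField.adjoin K (T : Set Ω) :=
        fun j => IntermediateField.exists_finset_of_mem_adjoin (hf _)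
      choose T hT1 hT2 using hwit
      set t : Finset Ω := Finset.univ.biUnion T with ht
      set β : Fin t.card → Ω := fun i => ((t.equivFin.symm i : ↥t) : Ω) with hβ
      have hrange : Set.range β = (t : Set Ω) := by
        rw [show β = (fun y : ↥t => (y : Ω)) ∘ t.equivFin.symm from rfl, Set.range_comp,
          Equiv.range_eq_univ, Set.image_univ]
        exact Subtype.range_coe
      have htS : ∀ y ∈ t, IsAlgebraic k y := by
        intro y hy
        obtain ⟨j, -, hj⟩ := Finset.mem_biUnion.mp hy
        exact hT1 j hj
      have hβalg : ∀ j, IsAlgebraic k (β j) := fun j => htS _ (t.equivFin.symm j).2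
      have h0 : HasLevelLE k K L 0 := by
        refine hasLevelLE_of_gens k K L f β
          (fun j => ((hβalg j).tower_top K).isIntegral) ?_ 0
          (fun F E hFE j hE => ed_le_zero_step hFE (hβalg j) hE)
        refine forall_mem_of_basis f _ ?_
        intro j
        refine IntermediateField.adjoin.mono _ _ _ ?_ (hT2 j)
        rw [hrange]
        exact fun y hy => Finset.mem_coe.mpr
          (Finset.mem_biUnion.mpr ⟨j, Finset.mem_univ j, hy⟩)
      exact le_antisymm (csInf_le (OrderBot.bddBelow _) h0) zero_le
  refine ⟨main, ?_⟩
  intro hkC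
  rw [main]
  constructor
  · rintro ⟨f, hf⟩
    have hS : {y : Ω | IsAlgebraic k y} ⊆ (↑(⊥ : IntermediateField K Ω) : Set Ω) := by
      intro y hy
      have hyI := hy.isIntegral
      have hdeg := IsAlgClosed.degree_eq_one_of_irreducible k (minpoly.irreducible hyI)
      have hform := Polynomial.eq_X_add_C_of_degree_le_one (le_of_eq hdeg)
      have hnd : (minpoly k y).natDegree = 1 := Polynomial.natDegree_eq_of_degree_eq_some hdeg
      have hc1 : (minpoly k y).coeff 1 = 1 := by
        have h3 := (minpoly.monic hyI).coeff_natDegree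
        rwa [hnd] at h3
      have haev := minpoly.aeval k y
      rw [hform, hc1, map_one, one_mul, map_add, Polynomial.aeval_X, Polynomial.aeval_C] at haev
      rw [SetLike.mem_coe, IntermediateField.mem_bot]
      refine ⟨algebraMap k K (-(minpoly k y).coeff 0), ?_⟩
      rw [← IsScalarTower.algebraMap_apply, map_neg]
      exact neg_eq_of_add_eq_zero_left haev
    have hadj : IntermediateField.adjoin K {y : Ω | IsAlgebraic k y} ≤ ⊥ :=
      IntermediateField.adjoin_le_iff.mpr hS
    refine ⟨RingHom.injective _, fun x => ?_⟩
    have h10 := hadj (hf x)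
    rw [IntermediateField.mem_bot] at h10
    obtain ⟨y, hy⟩ := h10
    refine ⟨y, ?_⟩
    have h11 : f (algebraMap K L y) = f x := by rw [AlgHom.commutes]; exact hy
    exact RingHom.injective (f : L →+* Ω) h11
  · intro hbij
    have hbij' : Function.Bijective (Algebra.ofId K L) := hbij
    set e := AlgEquiv.ofBijective (Algebra.ofId K L) hbij' with he
    refine ⟨(Algebra.ofId K Ω).comp e.symm.toAlgHom, fun x => ?_⟩
    exact IntermediateField.algebraMap_mem _ (e.symm x)
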